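/- Any triple of the form (x, y, z) = (2cosh(λ/2), 2cosh(τ/2)/tanh(λ/2), 2cosh((τ+λ)/2)/tanh(λ/2)), with λ, τ ∈ ℂ and λ ∉ π√-1·ℤ, satisfies the once-punctured torus relation x² + y² + z² - xyz = 0. -/

import Mathlib

open Complex

theorem FN_satisfies_character_variety_relation
    (lam τ : ℂ) (hlam : ¬ ∃ k : ℤ, lam = (k : ℂ) * Real.pi * Complex.I) :
    (2 * Complex.cosh (lam / 2)) ^ 2
      + (2 * Complex.cosh (τ / 2) / Complex.tanh (lam / 2)) ^ 2
      + (2 * Complex.cosh ((τ + lam) / 2) / Complex.tanh (lam / 2)) ^ 2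
      - (2 * Complex.cosh (lam / 2))
        * (2 * Complex.cosh (τ / 2) / Complex.tanh (lam / 2))
        * (2 * Complex.cosh ((τ + lam) / 2) / Complex.tanh (lam / 2)) = 0 := by
  have hs : Complex.sinh (lam / 2) ≠ 0 := by
    intro h
    have : Complex.sin (lam / 2 * Complex.I) = 0 := by
      rw [Complex.sin_mul_I, h, zero_mul]
    obtain ⟨k, hk⟩ := Complex.sin_eq_zero_iff.1 this
    exact hlam ⟨-2 * k, by
      push_cast
      linear_combination (-2 * Complex.I) * hk + lam * Complex.I_sq⟩
  have hc : Complex.cosh (lam / 2) ≠ 0 := by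
    intro h
    have : Complex.cos (lam / 2 * Complex.I) = 0 := by
      rw [Complex.cos_mul_I, h]
    obtain ⟨k, hk⟩ := Complex.cos_eq_zero_iff.1 this
    exact hlam ⟨-(2 * k + 1), by
      push_cast
      linear_combination (-2 * Complex.I) * hk + lam * Complex.I_sq⟩
  rw [Complex.tanh_eq_sinh_div_cosh]
  have h1 : (τ + lam) / 2 = τ / 2 + lam / 2 := by ring
  rw [h1, Complex.cosh_add]
  have p1 := Complex.cosh_sq_sub_sinh_sq (lam / 2)
  have p2 := Complex.cosh_sq_sub_sinh_sq (τ / 2)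
  field_simp
  linear_combination
    (-4 * Complex.cosh (lam/2)^2 * Complex.cosh (τ/2)^2) * p1
    + (-4 * Complex.cosh (lam/2)^2 * Complex.sinh (lam/2)^2) * p2
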